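/- Let A be the ring of integers of a local field K of characteristic 2, with maximal ideal m and valuation val. Let ρ : G → GL_2(A) be a group homomorphism. Suppose σ₀ ∈ G is such that ρ(σ₀) has distinct eigenvalues α₀, β₀ ∈ A and det ρ(σ₀) = 1, and set w = val(tr ρ(σ₀)). If σ ∈ G satisfies det ρ(σ) = 1 and tr ρ(σ) − tr ρ(σ₀) ∈ m^{2w+1}, then ρ(σ) has distinct eigenvalues α, β in A and val(α − β) = val(α₀ − β₀). -/

import Mathlib

open Polynomial

lemma my_charpoly_fin_two {A : Type*} [CommRing A] (M : Matrix (Fin 2) (Fin 2) A) :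
    M.charpoly = X ^ 2 - C M.trace * X + C M.det := by
  rw [Matrix.charpoly, Matrix.det_fin_two, Matrix.trace_fin_two, Matrix.det_fin_two]
  simp [Matrix.charmatrix_apply_eq, Matrix.charmatrix_apply_ne]
  ring

/-- Let `A` be the ring of integers of a local field of characteristic 2 (a complete DVR with
finite residue field) with uniformizer `ϖ`, and `ρ : G → GL₂(A)`. Suppose `ρ(σ₀)` has distinct
eigenvalues `α₀, β₀ ∈ A` and determinant 1, and `w = val(tr ρ(σ₀))`. If `σ ∈ G` satisfies
`det ρ(σ) = 1` and `tr ρ(σ) − tr ρ(σ₀) ∈ m^(2w+1)`, then `ρ(σ)` has distinct eigenvalues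
`α, β ∈ A` and `val(α − β) = val(α₀ − β₀)`. -/
theorem statement10 {A : Type*} [CommRing A] [IsDomain A] [IsDiscreteValuationRing A]
    [CharP A 2] [IsAdicComplete (IsLocalRing.maximalIdeal A) A]
    [Finite (IsLocalRing.ResidueField A)]
    (ϖ : A) (hϖ : Irreducible ϖ)
    {G : Type*} [Group G] (ρ : G →* (Matrix (Fin 2) (Fin 2) A)ˣ)
    (σ₀ : G) (α₀ β₀ : A) (h₀ : α₀ ≠ β₀)
    (hchar₀ : Matrix.charpoly (ρ σ₀ : Matrix (Fin 2) (Fin 2) A)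
        = (Polynomial.X - Polynomial.C α₀) * (Polynomial.X - Polynomial.C β₀))
    (hdet₀ : (ρ σ₀ : Matrix (Fin 2) (Fin 2) A).det = 1)
    (w : ℕ)
    (hw1 : (ρ σ₀ : Matrix (Fin 2) (Fin 2) A).trace ∈ Ideal.span {ϖ ^ w})
    (hw2 : (ρ σ₀ : Matrix (Fin 2) (Fin 2) A).trace ∉ Ideal.span {ϖ ^ (w + 1)})
    (σ : G) (hdet : (ρ σ : Matrix (Fin 2) (Fin 2) A).det = 1)
    (htr : (ρ σ : Matrix (Fin 2) (Fin 2) A).trace - (ρ σ₀ : Matrix (Fin 2) (Fin 2) A).trace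
        ∈ IsLocalRing.maximalIdeal A ^ (2 * w + 1)) :
    ∃ α β : A,
      Matrix.charpoly (ρ σ : Matrix (Fin 2) (Fin 2) A)
          = (Polynomial.X - Polynomial.C α) * (Polynomial.X - Polynomial.C β) ∧
      α ≠ β ∧
      ∀ k : ℕ, α - β ∈ Ideal.span {ϖ ^ k} ↔ α₀ - β₀ ∈ Ideal.span {ϖ ^ k} := by
  have h2 : (2 : A) = 0 := by
    have := CharP.cast_eq_zero A 2
    exact_mod_cast this
  set t₀ := (ρ σ₀ : Matrix (Fin 2) (Fin 2) A).trace with ht₀def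
  set t := (ρ σ : Matrix (Fin 2) (Fin 2) A).trace with htdef
  have hmax : IsLocalRing.maximalIdeal A = Ideal.span {ϖ} :=
    (IsDiscreteValuationRing.irreducible_iff_uniformizer ϖ).mp hϖ
  have hmaxpow : ∀ n : ℕ, (IsLocalRing.maximalIdeal A) ^ n = Ideal.span {ϖ ^ n} := by
    intro n; rw [hmax, Ideal.span_singleton_pow]
  have hspanle : ∀ m n : ℕ, m ≤ n →
      (Ideal.span {ϖ ^ n} : Ideal A) ≤ Ideal.span {ϖ ^ m} := fun m n hmn =>
    Ideal.span_singleton_le_span_singleton.mpr (pow_dvd_pow ϖ hmn)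
  -- trace/eigenvalue relations for σ₀
  have hcp₀ : (X : A[X]) ^ 2 - C t₀ * X + C 1 = (X - C α₀) * (X - C β₀) := by
    rw [← hdet₀, ← my_charpoly_fin_two, hchar₀]
  have hrhs : ((X : A[X]) - C α₀) * (X - C β₀) = X ^ 2 - C (α₀ + β₀) * X + C (α₀ * β₀) := by
    simp only [map_add, map_mul]; ring
  have ht₀ : t₀ = α₀ + β₀ := by
    rw [hrhs] at hcp₀
    have h := congrArg (fun p => Polynomial.coeff p 1) hcp₀
    simp [coeff_one] at h
    linear_combination -h
  have hroot₀ : α₀ ^ 2 - t₀ * α₀ + 1 = 0 := by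
    have h := congrArg (Polynomial.eval α₀) hcp₀
    simpa using h
  -- valuation facts
  have htrs : t - t₀ ∈ Ideal.span {ϖ ^ (2 * w + 1)} := by rwa [hmaxpow] at htr
  have ht_in : t ∈ Ideal.span {ϖ ^ w} := by
    have : t = t₀ + (t - t₀) := by ring
    rw [this]
    exact Ideal.add_mem _ hw1 (hspanle w (2 * w + 1) (by omega) htrs)
  have ht_nin : t ∉ Ideal.span {ϖ ^ (w + 1)} := by
    intro h
    apply hw2
    have : t₀ = t - (t - t₀) := by ring
    rw [this]
    exact Ideal.sub_mem _ h (hspanle (w + 1) (2 * w + 1) (by omega) htrs)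
  -- write t = ϖ^w * s with s a unit
  obtain ⟨s, hs⟩ := Ideal.mem_span_singleton.mp ht_in
  have hsu : IsUnit s := by
    by_contra hsu
    apply ht_nin
    rw [hs]
    rcases Ideal.mem_span_singleton.mp
      (by rw [← hmax]; exact (IsLocalRing.mem_maximalIdeal s).mpr hsu) with ⟨v, hv⟩
    exact Ideal.mem_span_singleton.mpr ⟨v, by rw [hv]; ring⟩
  obtain ⟨u, hu⟩ := hsu
  -- f(α₀) ∈ m^(2w+1)
  have hfa0 : (t₀ - t) * α₀ ∈ Ideal.span {ϖ ^ (2 * w + 1)} := by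
    have : t₀ - t = -(t - t₀) := by ring
    rw [this]
    exact Ideal.mul_mem_right _ _ (neg_mem htrs)
  obtain ⟨r, hr⟩ := Ideal.mem_span_singleton.mp hfa0
  -- key identity: t^2 * c = (t₀ - t) * α₀ where c = ϖ * r * (u⁻¹)^2
  set s' : A := ((u⁻¹ : Aˣ) : A) with hs'def
  have hss : s * s' = 1 := by rw [← hu, hs'def]; exact u.mul_inv
  set c : A := ϖ * r * s' ^ 2 with hcdef
  have hts : t * s' = ϖ ^ w := by
    rw [hs, mul_assoc, hss, mul_one]
  have hkey : t ^ 2 * c = (t₀ - t) * α₀ := by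
    calc t ^ 2 * c = ϖ * r * (t * s') ^ 2 := by rw [hcdef]; ring
      _ = ϖ * r * (ϖ ^ w) ^ 2 := by rw [hts]
      _ = ϖ ^ (2 * w + 1) * r := by ring
      _ = (t₀ - t) * α₀ := hr.symm
  -- Hensel's lemma for g = X^2 + X + C c
  set g : A[X] := X ^ 2 + X + C c with hgdef
  have hgmonic : g.Monic := by
    rw [hgdef]
    have heq : (X : A[X]) ^ 2 + X + C c = X ^ 2 + (X + C c) := by ring
    rw [heq]
    apply Polynomial.monic_X_pow_add
    refine lt_of_le_of_lt (Polynomial.degree_add_le _ _) ?_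
    rw [max_lt_iff]
    constructor
    · rw [Polynomial.degree_X]; norm_num
    · exact lt_of_le_of_lt (Polynomial.degree_C_le) (by norm_num)
  have hgeval : g.eval 0 ∈ IsLocalRing.maximalIdeal A := by
    rw [hgdef, hmax]
    simp only [eval_add, eval_pow, eval_X, eval_C]
    norm_num
    exact Ideal.mem_span_singleton.mpr ⟨r * s' ^ 2, by rw [hcdef]; ring⟩
  have hgderiv : IsUnit ((Ideal.Quotient.mk (IsLocalRing.maximalIdeal A))
      (g.derivative.eval 0)) := by
    have : g.derivative.eval 0 = 1 := by
      rw [hgdef]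
      simp [derivative_X_pow]
    rw [this, map_one]
    exact isUnit_one
  obtain ⟨η, hηroot, -⟩ := HenselianRing.is_henselian g hgmonic 0 hgeval hgderiv
  have hη : η ^ 2 + η + c = 0 := by
    have := hηroot
    rw [hgdef] at this
    simpa [Polynomial.IsRoot] using this
  -- the eigenvalues
  refine ⟨α₀ + t * η, t - (α₀ + t * η), ?_, ?_, ?_⟩
  · -- charpoly factorization
    set α : A := α₀ + t * η with hαdef
    have hrootα : α ^ 2 - t * α + 1 = 0 := by
      rw [hαdef]
      linear_combination hroot₀ + hkey + t ^ 2 * hη +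
        (α₀ * t * η - α₀ * t + α₀ * t₀ - t ^ 2 * η - t ^ 2 * ϖ * r * s' ^ 2) * h2
    have hprod : α * (t - α) = 1 := by linear_combination -hrootα
    have hsum : α + (t - α) = t := by ring
    rw [my_charpoly_fin_two, hdet, ← htdef]
    have : ((X : A[X]) - C α) * (X - C (t - α)) =
        X ^ 2 - C (α + (t - α)) * X + C (α * (t - α)) := by
      simp only [map_add, map_mul, map_sub]; ring
    rw [this, hprod, hsum]
  · -- distinct
    intro h
    have : t = 0 := by linear_combination -h + (α₀ + t * η) * h2
    exact ht_nin (this ▸ Ideal.zero_mem _)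
  · -- valuations
    intro k
    have hab : α₀ + t * η - (t - (α₀ + t * η)) = -t + (α₀ + t * η) * 2 := by ring
    have hab' : α₀ + t * η - (t - (α₀ + t * η)) = -t := by rw [hab, h2]; ring
    have hab₀ : α₀ - β₀ = t₀ - β₀ * 2 := by rw [ht₀]; ring
    have hab₀' : α₀ - β₀ = t₀ := by rw [hab₀, h2]; ring
    rw [hab', hab₀', neg_mem_iff]
    rcases le_or_gt k w with hk | hk
    · exact ⟨fun _ => hspanle k w hk hw1, fun _ => hspanle k w hk ht_in⟩
    · exact ⟨fun h => (ht_nin (hspanle (w + 1) k hk h)).elim,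
        fun h => (hw2 (hspanle (w + 1) k hk h)).elim⟩
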